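/- Let 0 < a₁ ≠ a₂ ≠ ... ≠ a_N be distinct positive reals and Y₁,...,Y_N i.i.d. Bernoulli(1/2). Then for every integer k, P(a₁Y₁ + ... + a_NY_N = k) ≤ P(Y₁ + 2Y₂ + ... + NY_N = ⌊N(N+1)/4⌋). -/

import Mathlib

open Finset

noncomputable section

/-- Probability mass function of `∑ aᵢ Yᵢ` where `Y₁, …, Y_N` are i.i.d. Bernoulli(1/2). -/
def wpmf (N : ℕ) (a : Fin N → ℝ) : ℝ → ℝ := fun t =>
  ((univ.filter fun x : Fin N → Bool =>
      ∑ i, a i * (if x i then 1 else 0) = t).card : ℝ) / 2 ^ N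

namespace EM

attribute [local instance] Classical.propDecidable

def Om (n : ℕ) : Finset (Finset ℕ) := (Icc 1 n).powerset

def rk (S : Finset ℕ) : ℕ := S.sum id

def Tn (n : ℕ) : ℕ := (Icc 1 n).sum id

def upAp (j : ℕ) (S : Finset ℕ) : Prop := (j = 0 ∨ j ∈ S) ∧ j+1 ∉ S

def upMv (j : ℕ) (S : Finset ℕ) : Finset ℕ := insert (j+1) (S.erase j)

def dnAp (j : ℕ) (S : Finset ℕ) : Prop := j+1 ∈ S ∧ j ∉ S

def dnMv (j : ℕ) (S : Finset ℕ) : Finset ℕ :=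
  if j = 0 then S.erase 1 else insert j (S.erase (j+1))

lemma mem_Om {n : ℕ} {S : Finset ℕ} : S ∈ Om n ↔ S ⊆ Icc 1 n := mem_powerset

lemma zero_not_mem {n : ℕ} {S : Finset ℕ} (h : S ∈ Om n) : 0 ∉ S := by
  intro h0
  have := mem_Om.1 h h0
  simp at this

lemma TnEq (n : ℕ) : Tn n = n*(n+1)/2 := by
  induction n with
  | zero => simp [Tn]
  | succ m ih =>
      have hins : Icc 1 (m+1) = insert (m+1) (Icc 1 m) := by
        ext a; simp [Finset.mem_Icc]; omega
      rw [Tn, hins, Finset.sum_insert (by simp), ← Tn, ih]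
      have h2 : 2 ∣ m * (m+1) := Nat.even_mul_succ_self m |>.two_dvd
      have e1 : m*(m+1) + 2*(m+1) = (m+1)*(m+1+1) := by ring
      simp only [id]
      omega

lemma rk_le_Tn {n : ℕ} {S : Finset ℕ} (h : S ∈ Om n) : rk S ≤ Tn n :=
  Finset.sum_le_sum_of_subset (mem_Om.1 h)

lemma up_dn {j : ℕ} {S : Finset ℕ} (h : upAp j S) (h0 : 0 ∉ S) :
    dnAp j (upMv j S) ∧ dnMv j (upMv j S) = S := by
  obtain ⟨hj, hj1⟩ := h
  constructor
  · exact ⟨mem_insert_self _ _, by simp [upMv]⟩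
  · rcases eq_or_ne j 0 with rfl | hne
    · have he : S.erase 0 = S := erase_eq_of_notMem h0
      simp only [dnMv, upMv, if_pos rfl, he]
      exact erase_insert (by simpa using hj1)
    · simp only [dnMv, upMv, if_neg hne]
      rw [erase_insert (by simp [Finset.mem_erase, hj1])]
      exact insert_erase (hj.resolve_left hne)

lemma dn_up {j : ℕ} {S : Finset ℕ} (h : dnAp j S) (h0 : 0 ∉ S) :
    upAp j (dnMv j S) ∧ upMv j (dnMv j S) = S := by
  obtain ⟨hj1, hj⟩ := h
  rcases eq_or_ne j 0 with rfl | hne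
  · constructor
    · exact ⟨Or.inl rfl, by simp [dnMv]⟩
    · simp only [dnMv, upMv, if_pos rfl]
      rw [erase_eq_of_notMem (by simp [Finset.mem_erase, h0])]
      exact insert_erase hj1
  · constructor
    · refine ⟨Or.inr ?_, ?_⟩
      · simp [dnMv, if_neg hne]
      · simp only [dnMv, if_neg hne]
        simp [Finset.mem_insert, Finset.mem_erase]
    · simp only [dnMv, upMv, if_neg hne]
      rw [erase_insert (by simp [Finset.mem_erase, hj])]
      exact insert_erase hj1

lemma up_mem {n j : ℕ} {S : Finset ℕ} (h : upAp j S) (hj : j < n) (hS : S ∈ Om n) :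
    upMv j S ∈ Om n := by
  rw [mem_Om]
  intro a ha
  rcases mem_insert.1 ha with rfl | ha
  · simp [Finset.mem_Icc]; omega
  · exact mem_Om.1 hS (mem_of_mem_erase ha)

lemma dn_lt {n j : ℕ} {S : Finset ℕ} (h : dnAp j S) (hS : S ∈ Om n) : j < n := by
  have := mem_Om.1 hS h.1
  simp [Finset.mem_Icc] at this
  omega

lemma dn_mem {n j : ℕ} {S : Finset ℕ} (h : dnAp j S) (hS : S ∈ Om n) :
    dnMv j S ∈ Om n := by
  have hj := dn_lt h hS
  rw [mem_Om]
  intro a ha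
  rcases eq_or_ne j 0 with rfl | hne
  · simp only [dnMv, if_pos rfl] at ha
    exact mem_Om.1 hS (mem_of_mem_erase ha)
  · simp only [dnMv, if_neg hne] at ha
    rcases mem_insert.1 ha with rfl | ha
    · simp [Finset.mem_Icc]; omega
    · exact mem_Om.1 hS (mem_of_mem_erase ha)

lemma rk_up {j : ℕ} {S : Finset ℕ} (h : upAp j S) (h0 : 0 ∉ S) :
    rk (upMv j S) = rk S + 1 := by
  obtain ⟨hj, hj1⟩ := h
  have hnm : j+1 ∉ S.erase j := by simp [Finset.mem_erase, hj1]
  have h1 : rk (upMv j S) = (j+1) + (S.erase j).sum id := by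
    rw [upMv, rk, Finset.sum_insert hnm]; rfl
  rcases eq_or_ne j 0 with rfl | hne
  · rw [h1, erase_eq_of_notMem h0]; unfold rk; omega
  · have h2 : (S.erase j).sum id + j = rk S := by
      simpa [rk] using Finset.sum_erase_add S id (hj.resolve_left hne)
    omega

lemma rk_dn {n j : ℕ} {S : Finset ℕ} (h : dnAp j S) (hS : S ∈ Om n) :
    rk (dnMv j S) + 1 = rk S := by
  obtain ⟨hup, heq⟩ := dn_up h (zero_not_mem hS)
  have h0 : 0 ∉ dnMv j S := zero_not_mem (dn_mem h hS)
  have := rk_up hup h0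
  rw [heq] at this
  omega

lemma up_inj_j {j j' : ℕ} {S : Finset ℕ} (h : upAp j S) (h' : upAp j' S)
    (he : upMv j S = upMv j' S) : j = j' := by
  by_contra hne
  have : (j:ℕ)+1 ∈ upMv j' S := he ▸ mem_insert_self _ _
  rcases mem_insert.1 this with h1 | h1
  · omega
  · exact h.2 (mem_of_mem_erase h1)

lemma dn_inj_j {j j' : ℕ} {S : Finset ℕ} (h : dnAp j S) (h' : dnAp j' S)
    (he : dnMv j S = dnMv j' S) : j = j' := by
  by_contra hne
  rcases eq_or_ne j 0 with rfl | hj0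
  · rcases eq_or_ne j' 0 with rfl | hj'0
    · omega
    · have hmem : j' ∈ dnMv j' S := by simp [dnMv, if_neg hj'0]
      rw [← he] at hmem
      simp only [dnMv, if_pos rfl] at hmem
      exact h'.2 (mem_of_mem_erase hmem)
  · have hmem : j ∈ dnMv j S := by simp [dnMv, if_neg hj0]
    rw [he] at hmem
    rcases eq_or_ne j' 0 with rfl | hj'0
    · simp only [dnMv, if_pos rfl] at hmem
      exact h.2 (mem_of_mem_erase hmem)
    · simp only [dnMv, if_neg hj'0] at hmem
      rcases mem_insert.1 hmem with h1 | h1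
      · exact hne h1
      · exact h.2 (mem_of_mem_erase h1)

lemma up_inj_S {j : ℕ} {S S' : Finset ℕ} (h : upAp j S) (h' : upAp j S')
    (h0 : 0 ∉ S) (h0' : 0 ∉ S') (he : upMv j S = upMv j S') : S = S' := by
  rw [← (up_dn h h0).2, ← (up_dn h' h0').2, he]

lemma dn_inj_S {n : ℕ} {j : ℕ} {S S' : Finset ℕ} (h : dnAp j S) (h' : dnAp j S')
    (hS : S ∈ Om n) (hS' : S' ∈ Om n) (he : dnMv j S = dnMv j S') : S = S' := by
  rw [← (dn_up h (zero_not_mem hS)).2, ← (dn_up h' (zero_not_mem hS')).2, he]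

lemma comm_up {j j' : ℕ} {z : Finset ℕ} (h : upAp j z) (h' : upAp j' z) (hne : j ≠ j') :
    upAp j' (upMv j z) ∧ upMv j' (upMv j z) = upMv j (upMv j' z) := by
  obtain ⟨hj, hj1⟩ := h
  obtain ⟨hj', hj'1⟩ := h'
  have d1 : j' ≠ j + 1 := by rintro rfl; exact hj1 (hj'.resolve_left (by omega))
  have d2 : j ≠ j' + 1 := by rintro rfl; exact hj'1 (hj.resolve_left (by omega))
  constructor
  · constructor
    · rcases hj' with rfl | hj'
      · exact Or.inl rfl
      · exact Or.inr (mem_insert_of_mem (mem_erase.2 ⟨fun hh => hne hh.symm, hj'⟩))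
    · intro hmem
      rcases mem_insert.1 hmem with h1 | h1
      · omega
      · exact hj'1 (mem_of_mem_erase h1)
  · ext a
    simp only [upMv, mem_insert, mem_erase]
    by_cases hz : a ∈ z <;> simp [hz] <;> omega

lemma comm_dn {j j' : ℕ} {z : Finset ℕ} (h : dnAp j z) (h' : dnAp j' z) (hne : j ≠ j') :
    dnAp j' (dnMv j z) ∧ dnMv j' (dnMv j z) = dnMv j (dnMv j' z) := by
  obtain ⟨hj1, hj⟩ := h
  obtain ⟨hj'1, hj'⟩ := h'
  have d1 : j' ≠ j + 1 := by rintro rfl; exact hj' hj1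
  have d2 : j ≠ j' + 1 := by rintro rfl; exact hj hj'1
  constructor
  · constructor
    · rcases eq_or_ne j 0 with rfl | hj0
      · simp only [dnMv, if_pos rfl]
        exact mem_erase.2 ⟨by omega, hj'1⟩
      · simp only [dnMv, if_neg hj0]
        exact mem_insert_of_mem (mem_erase.2 ⟨by omega, hj'1⟩)
    · rcases eq_or_ne j 0 with rfl | hj0
      · simp only [dnMv, if_pos rfl]
        intro hmem; exact hj' (mem_of_mem_erase hmem)
      · simp only [dnMv, if_neg hj0]
        intro hmem
        rcases mem_insert.1 hmem with h1 | h1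
        · exact hne h1.symm
        · exact hj' (mem_of_mem_erase h1)
  · rcases eq_or_ne j 0 with rfl | hj0 <;> rcases eq_or_ne j' 0 with rfl | hj'0
    · omega
    · simp only [dnMv, if_pos rfl, if_neg hj'0]
      ext a
      simp only [mem_insert, mem_erase]
      by_cases hz : a ∈ z <;> simp [hz] <;> omega
    · simp only [dnMv, if_pos rfl, if_neg hj0]
      ext a
      simp only [mem_insert, mem_erase]
      by_cases hz : a ∈ z <;> simp [hz] <;> omega
    · simp only [dnMv, if_neg hj0, if_neg hj'0]
      ext a
      simp only [mem_insert, mem_erase]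
      by_cases hz : a ∈ z <;> simp [hz] <;> omega
def pc (n j : ℕ) : ℝ := if j = 0 then (Tn n : ℝ) else ((n:ℝ)+j+1)*((n:ℝ)-j)

lemma TnR (n : ℕ) : (Tn n : ℝ) * 2 = (n:ℝ)*((n:ℝ)+1) := by
  have h2 : 2 ∣ n * (n+1) := Nat.even_mul_succ_self n |>.two_dvd
  have : Tn n * 2 = n * (n+1) := by rw [TnEq]; omega
  have := congrArg (fun m : ℕ => (m:ℝ)) this
  push_cast at this
  linarith

lemma pc_pos {n j : ℕ} (hj : j < n) : 0 < pc n j := by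
  rcases eq_or_ne j 0 with rfl | hne
  · rw [pc, if_pos rfl]
    have h1 : 1*2 ≤ n*(n+1) := Nat.mul_le_mul (by omega) (by omega)
    have : 0 < Tn n := by rw [TnEq]; omega
    exact_mod_cast this
  · rw [pc, if_neg hne]
    have h1 : (0:ℝ) < (n:ℝ)+j+1 := by positivity
    have h2 : (0:ℝ) < (n:ℝ)-(j:ℝ) := by
      have : (j:ℝ) < n := by exact_mod_cast hj
      linarith
    positivity

def gx (n : ℕ) (x : Finset ℕ) (j : ℕ) : ℝ :=
  if j = 0 then (Tn n : ℝ) else (((n:ℝ)+j+1)*((n:ℝ)-j)) * (if j ∈ x then 1 else 0)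

lemma diag {n : ℕ} {x : Finset ℕ} (hx : x ∈ Om n) :
    ∑ j ∈ range n, ((if upAp j x then pc n j else 0) - (if dnAp j x then pc n j else 0))
      = (Tn n : ℝ) - 2 * (rk x : ℝ) := by
  have h0 := zero_not_mem hx
  have key : ∀ j ∈ range n,
      ((if upAp j x then pc n j else 0) - (if dnAp j x then pc n j else 0))
        = ((gx n x j - gx n x (j+1)) + (-2*((j:ℝ)+1) * (if (j+1) ∈ x then 1 else 0))) := by
    intro j hj
    rw [Finset.mem_range] at hj
    rcases eq_or_ne j 0 with rfl | hj0
    · have hup : upAp 0 x ↔ 1 ∉ x := by simp [upAp]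
      have hdn : dnAp 0 x ↔ 1 ∈ x := by simp [dnAp, h0]
      have hq : ((n:ℝ)+0+1+1)*((n:ℝ)-(0+1)) + 2 = (Tn n : ℝ) * 2 := by
        rw [TnR]; push_cast; ring
      by_cases h1 : 1 ∈ x <;>
        simp only [hup, hdn, h1, if_pos, if_neg, not_true, not_false_iff, if_true, if_false,
          pc, gx, Nat.succ_ne_zero, ite_true, ite_false] <;>
      · push_cast at hq ⊢
        nlinarith [hq]
    · have hup : upAp j x ↔ (j ∈ x ∧ j+1 ∉ x) := by simp [upAp, hj0]
      have hdn : dnAp j x ↔ (j+1 ∈ x ∧ j ∉ x) := by simp [dnAp, and_comm]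
      by_cases hjx : j ∈ x <;> by_cases hjx1 : j+1 ∈ x <;>
        simp only [hup, hdn, hjx, hjx1, pc, gx, if_neg hj0, Nat.succ_ne_zero, and_true,
          and_false, true_and, false_and, not_true, not_false_iff, if_true, if_false,
          ite_true, ite_false, if_neg (Nat.succ_ne_zero j)] <;>
      · push_cast
        ring
  rw [Finset.sum_congr rfl key, Finset.sum_add_distrib, Finset.sum_range_sub' (gx n x) n]
  have hg0 : gx n x 0 = (Tn n : ℝ) := if_pos rfl
  have hgn : gx n x n = 0 := by
    rcases eq_or_ne n 0 with rfl | hn0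
    · simp [gx, Tn]
    · simp only [gx, if_neg hn0, sub_self, mul_zero, zero_mul]
  have h1 : ∑ j ∈ range n, (-2*((j:ℝ)+1) * (if (j+1) ∈ x then (1:ℝ) else 0))
      = -2 * ∑ j ∈ range n, (if (j+1) ∈ x then (((j:ℕ)+1:ℕ):ℝ) else 0) := by
    rw [Finset.mul_sum]
    refine Finset.sum_congr rfl fun j _ => ?_
    by_cases hh : (j+1) ∈ x <;> simp [hh] <;> push_cast <;> ring
  have h2 : ∑ j ∈ range n, (if (j+1) ∈ x then (((j:ℕ)+1:ℕ):ℝ) else 0)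
      = ∑ v ∈ Icc 1 n, (if v ∈ x then ((v:ℕ):ℝ) else 0) := by
    refine Finset.sum_nbij' (i := fun j => j + 1) (j := fun v => v - 1) ?_ ?_ ?_ ?_ ?_
    · intro a ha; simp at ha ⊢; omega
    · intro b hb; simp at hb ⊢; omega
    · intro a _; simp
    · intro b hb; simp at hb ⊢; omega
    · intro a _; rfl
  have h3 : ∑ v ∈ Icc 1 n, (if v ∈ x then ((v:ℕ):ℝ) else 0) = (rk x : ℝ) := by
    rw [← Finset.sum_filter]
    have hf : (Icc 1 n).filter (fun v => v ∈ x) = x := by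
      ext v
      simp only [Finset.mem_filter]
      exact ⟨fun h => h.2, fun h => ⟨mem_Om.1 hx h, h⟩⟩
    rw [hf, rk]
    push_cast
    rfl
  rw [h1, h2, h3, hg0, hgn]
  ring
def cU (n : ℕ) (x y : Finset ℕ) : ℝ :=
  ∑ j ∈ range n, (if upAp j x ∧ y = upMv j x then (1:ℝ) else 0)

def cD (n : ℕ) (x y : Finset ℕ) : ℝ :=
  ∑ j ∈ range n, (if dnAp j x ∧ y = dnMv j x then pc n j else 0)

def Uop (n : ℕ) (f : Finset ℕ → ℝ) : Finset ℕ → ℝ := fun y => ∑ x ∈ Om n, cU n x y * f x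

def Dop (n : ℕ) (f : Finset ℕ → ℝ) : Finset ℕ → ℝ := fun y => ∑ x ∈ Om n, cD n x y * f x

lemma ite_mul_ite_one {P Q : Prop} [Decidable P] [Decidable Q] (c : ℝ) :
    (if P then (1:ℝ) else 0) * (if Q then c else 0) = if P ∧ Q then c else 0 := by
  split_ifs <;> simp_all

lemma ite_mul_ite_one' {P Q : Prop} [Decidable P] [Decidable Q] (c : ℝ) :
    (if P then c else 0) * (if Q then (1:ℝ) else 0) = if P ∧ Q then c else 0 := by
  split_ifs <;> simp_all

lemma cross {n j j' : ℕ} {x y : Finset ℕ} (hx : x ∈ Om n) (hy : y ∈ Om n) (hxy : x ≠ y) :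
    (upAp j x ∧ dnAp j' (upMv j x) ∧ y = dnMv j' (upMv j x)) ↔
    (dnAp j' x ∧ upAp j (dnMv j' x) ∧ y = upMv j (dnMv j' x)) := by
  have h0x := zero_not_mem hx
  have h0y := zero_not_mem hy
  constructor
  · rintro ⟨hap, hdn', hyeq⟩
    obtain ⟨hdnz, hxeq⟩ := up_dn hap h0x
    have jne : j ≠ j' := by
      rintro rfl
      exact hxy (hxeq ▸ hyeq ▸ rfl)
    obtain ⟨hdn'x, hcomm⟩ := comm_dn hdnz hdn' jne
    rw [hxeq] at hdn'x hcomm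
    obtain ⟨hdny, _⟩ := comm_dn hdn' hdnz (Ne.symm jne)
    rw [← hyeq] at hdny
    rw [← hyeq] at hcomm
    obtain ⟨hupy, hupeq⟩ := dn_up hdny h0y
    exact ⟨hdn'x, by rw [hcomm]; exact hupy, by rw [hcomm, hupeq]⟩
  · rintro ⟨hdn, hap', hyeq⟩
    obtain ⟨hupw, hweq⟩ := dn_up hdn h0x
    have jne : j ≠ j' := by
      rintro rfl
      exact hxy (hweq ▸ hyeq ▸ rfl)
    obtain ⟨hupy', hcomm⟩ := comm_up hap' hupw jne
    rw [hweq] at hcomm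
    rw [← hyeq] at hupy' hcomm
    obtain ⟨hupx, _⟩ := comm_up hupw hap' (Ne.symm jne)
    rw [hweq] at hupx
    obtain ⟨hdnz, hdneq⟩ := up_dn hupy' h0y
    rw [hcomm] at hdnz hdneq
    exact ⟨hupx, hdnz, hdneq.symm⟩

lemma entry {n : ℕ} {x y : Finset ℕ} (hx : x ∈ Om n) (hy : y ∈ Om n) :
    ∑ z ∈ Om n, (cU n x z * cD n z y - cD n x z * cU n z y)
      = if x = y then (Tn n : ℝ) - 2 * (rk x : ℝ) else 0 := by
  have h0x := zero_not_mem hx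
  have step1 : ∑ z ∈ Om n, cU n x z * cD n z y
      = ∑ j ∈ range n, ∑ j' ∈ range n,
          (if (upAp j x ∧ dnAp j' (upMv j x) ∧ y = dnMv j' (upMv j x)) then pc n j' else 0) := by
    unfold cU cD
    calc ∑ z ∈ Om n, (∑ j ∈ range n, (if upAp j x ∧ z = upMv j x then (1:ℝ) else 0)) *
          (∑ j' ∈ range n, (if dnAp j' z ∧ y = dnMv j' z then pc n j' else 0))
        = ∑ z ∈ Om n, ∑ j ∈ range n, ∑ j' ∈ range n,
            (if (upAp j x ∧ z = upMv j x) ∧ (dnAp j' z ∧ y = dnMv j' z) then pc n j' else 0) := by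
          refine Finset.sum_congr rfl fun z _ => ?_
          rw [Finset.sum_mul_sum]
          exact Finset.sum_congr rfl fun j _ => Finset.sum_congr rfl fun j' _ =>
            ite_mul_ite_one _
      _ = ∑ j ∈ range n, ∑ j' ∈ range n, ∑ z ∈ Om n,
            (if (upAp j x ∧ z = upMv j x) ∧ (dnAp j' z ∧ y = dnMv j' z) then pc n j' else 0) := by
          rw [Finset.sum_comm]
          exact Finset.sum_congr rfl fun j _ => Finset.sum_comm
      _ = _ := by
          refine Finset.sum_congr rfl fun j hj => Finset.sum_congr rfl fun j' _ => ?_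
          rw [Finset.mem_range] at hj
          by_cases hap : upAp j x
          · rw [Finset.sum_eq_single_of_mem (upMv j x) (up_mem hap hj hx)]
            · simp [hap]
            · intro z _ hne
              rw [if_neg]
              tauto
          · rw [Finset.sum_eq_zero fun z _ => if_neg (by tauto), if_neg (by tauto)]
  have step2 : ∑ z ∈ Om n, cD n x z * cU n z y
      = ∑ j ∈ range n, ∑ j' ∈ range n,
          (if (dnAp j x ∧ upAp j' (dnMv j x) ∧ y = upMv j' (dnMv j x)) then pc n j else 0) := by
    unfold cU cD
    calc ∑ z ∈ Om n, (∑ j ∈ range n, (if dnAp j x ∧ z = dnMv j x then pc n j else 0)) *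
          (∑ j' ∈ range n, (if upAp j' z ∧ y = upMv j' z then (1:ℝ) else 0))
        = ∑ z ∈ Om n, ∑ j ∈ range n, ∑ j' ∈ range n,
            (if (dnAp j x ∧ z = dnMv j x) ∧ (upAp j' z ∧ y = upMv j' z) then pc n j else 0) := by
          refine Finset.sum_congr rfl fun z _ => ?_
          rw [Finset.sum_mul_sum]
          exact Finset.sum_congr rfl fun j _ => Finset.sum_congr rfl fun j' _ =>
            ite_mul_ite_one' _
      _ = ∑ j ∈ range n, ∑ j' ∈ range n, ∑ z ∈ Om n,
            (if (dnAp j x ∧ z = dnMv j x) ∧ (upAp j' z ∧ y = upMv j' z) then pc n j else 0) := by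
          rw [Finset.sum_comm]
          exact Finset.sum_congr rfl fun j _ => Finset.sum_comm
      _ = _ := by
          refine Finset.sum_congr rfl fun j _ => Finset.sum_congr rfl fun j' _ => ?_
          by_cases hap : dnAp j x
          · rw [Finset.sum_eq_single_of_mem (dnMv j x) (dn_mem hap hx)]
            · simp [hap]
            · intro z _ hne
              rw [if_neg]
              tauto
          · rw [Finset.sum_eq_zero fun z _ => if_neg (by tauto), if_neg (by tauto)]
  rw [Finset.sum_sub_distrib, step1, step2]
  by_cases hxy : x = y
  · subst hxy
    rw [if_pos rfl]
    have c1 : ∀ j ∈ range n,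
        (∑ j' ∈ range n, (if (upAp j x ∧ dnAp j' (upMv j x) ∧ x = dnMv j' (upMv j x))
          then pc n j' else 0)) = (if upAp j x then pc n j else 0) := by
      intro j hj
      by_cases hap : upAp j x
      · rw [Finset.sum_eq_single_of_mem j hj]
        · simp [hap, (up_dn hap h0x).1, (up_dn hap h0x).2]
        · intro j' _ hne
          rw [if_neg]
          rintro ⟨_, h2, h3⟩
          exact hne (dn_inj_j h2 (up_dn hap h0x).1 (h3.symm.trans (up_dn hap h0x).2.symm))
      · rw [Finset.sum_eq_zero fun j' _ => if_neg (by tauto), if_neg hap]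
    have c2 : ∀ j ∈ range n,
        (∑ j' ∈ range n, (if (dnAp j x ∧ upAp j' (dnMv j x) ∧ x = upMv j' (dnMv j x))
          then pc n j else 0)) = (if dnAp j x then pc n j else 0) := by
      intro j hj
      by_cases hap : dnAp j x
      · rw [Finset.sum_eq_single_of_mem j hj]
        · simp [hap, (dn_up hap h0x).1, (dn_up hap h0x).2]
        · intro j' _ hne
          rw [if_neg]
          rintro ⟨_, h2, h3⟩
          exact hne (up_inj_j h2 (dn_up hap h0x).1 (h3.symm.trans (dn_up hap h0x).2.symm))
      · rw [Finset.sum_eq_zero fun j' _ => if_neg (by tauto), if_neg hap]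
    rw [Finset.sum_congr rfl c1, Finset.sum_congr rfl c2, ← Finset.sum_sub_distrib]
    exact diag hx
  · rw [if_neg hxy, sub_eq_zero]
    calc ∑ j ∈ range n, ∑ j' ∈ range n,
          (if (upAp j x ∧ dnAp j' (upMv j x) ∧ y = dnMv j' (upMv j x)) then pc n j' else 0)
        = ∑ j ∈ range n, ∑ j' ∈ range n,
          (if (dnAp j' x ∧ upAp j (dnMv j' x) ∧ y = upMv j (dnMv j' x)) then pc n j' else 0) := by
          exact Finset.sum_congr rfl fun j _ => Finset.sum_congr rfl fun j' _ =>
            if_congr (cross hx hy hxy) rfl rfl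
      _ = _ := Finset.sum_comm
def lv (n m : ℕ) (f : Finset ℕ → ℝ) : Prop := ∀ x, f x ≠ 0 → x ∈ Om n ∧ rk x = m

lemma cU_ne {n : ℕ} {x y : Finset ℕ} (h : cU n x y ≠ 0) :
    ∃ j, j < n ∧ upAp j x ∧ y = upMv j x := by
  obtain ⟨j, hj, hne⟩ := Finset.exists_ne_zero_of_sum_ne_zero h
  rw [Finset.mem_range] at hj
  by_cases hc : upAp j x ∧ y = upMv j x
  · exact ⟨j, hj, hc⟩
  · rw [if_neg hc] at hne; exact absurd rfl hne

lemma cD_ne {n : ℕ} {x y : Finset ℕ} (h : cD n x y ≠ 0) :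
    ∃ j, j < n ∧ dnAp j x ∧ y = dnMv j x := by
  obtain ⟨j, hj, hne⟩ := Finset.exists_ne_zero_of_sum_ne_zero h
  rw [Finset.mem_range] at hj
  by_cases hc : dnAp j x ∧ y = dnMv j x
  · exact ⟨j, hj, hc⟩
  · rw [if_neg hc] at hne; exact absurd rfl hne

lemma uop_ne {n : ℕ} {f : Finset ℕ → ℝ} {y : Finset ℕ} (h : Uop n f y ≠ 0) :
    ∃ x ∈ Om n, f x ≠ 0 ∧ ∃ j, j < n ∧ upAp j x ∧ y = upMv j x := by
  obtain ⟨x, hx, hne⟩ := Finset.exists_ne_zero_of_sum_ne_zero h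
  refine ⟨x, hx, fun h0 => hne (by rw [h0, mul_zero]), cU_ne fun h0 => hne (by rw [h0, zero_mul])⟩

lemma dop_ne {n : ℕ} {f : Finset ℕ → ℝ} {y : Finset ℕ} (h : Dop n f y ≠ 0) :
    ∃ x ∈ Om n, f x ≠ 0 ∧ ∃ j, j < n ∧ dnAp j x ∧ y = dnMv j x := by
  obtain ⟨x, hx, hne⟩ := Finset.exists_ne_zero_of_sum_ne_zero h
  refine ⟨x, hx, fun h0 => hne (by rw [h0, mul_zero]), cD_ne fun h0 => hne (by rw [h0, zero_mul])⟩

lemma lv_U {n m : ℕ} {f : Finset ℕ → ℝ} (hf : lv n m f) : lv n (m+1) (Uop n f) := by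
  intro y hy
  obtain ⟨x, hx, hfx, j, hj, hap, rfl⟩ := uop_ne hy
  exact ⟨up_mem hap hj hx, by rw [rk_up hap (zero_not_mem hx), (hf x hfx).2]⟩

lemma lv_D {n m : ℕ} {f : Finset ℕ → ℝ} (hf : lv n m f) : lv n (m-1) (Dop n f) := by
  intro y hy
  obtain ⟨x, hx, hfx, j, hj, hap, rfl⟩ := dop_ne hy
  have := rk_dn hap hx
  exact ⟨dn_mem hap hx, by rw [(hf x hfx).2] at this; omega⟩

lemma cU_out {n : ℕ} {z y : Finset ℕ} (hz : z ∈ Om n) (hy : y ∉ Om n) : cU n z y = 0 := by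
  by_contra h
  obtain ⟨j, hj, hap, rfl⟩ := cU_ne h
  exact hy (up_mem hap hj hz)

lemma cD_out {n : ℕ} {z y : Finset ℕ} (hz : z ∈ Om n) (hy : y ∉ Om n) : cD n z y = 0 := by
  by_contra h
  obtain ⟨j, _, hap, rfl⟩ := cD_ne h
  exact hy (dn_mem hap hz)

lemma uop_add {n : ℕ} (g h : Finset ℕ → ℝ) (c : ℝ) :
    Uop n (fun x => g x + c * h x) = fun y => Uop n g y + c * Uop n h y := by
  funext y
  unfold Uop
  rw [Finset.mul_sum, ← Finset.sum_add_distrib]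
  exact Finset.sum_congr rfl fun x _ => by ring

lemma uiter_add {n : ℕ} (k : ℕ) (g h : Finset ℕ → ℝ) (c : ℝ) :
    (Uop n)^[k] (fun x => g x + c * h x) = fun y => (Uop n)^[k] g y + c * (Uop n)^[k] h y := by
  induction k generalizing g h with
  | zero => rfl
  | succ k ih =>
      rw [Function.iterate_succ_apply, Function.iterate_succ_apply, Function.iterate_succ_apply,
        uop_add, ih]

lemma uop_zero {n : ℕ} : Uop n (fun _ => (0:ℝ)) = fun _ => (0:ℝ) := by
  funext y; simp [Uop]

lemma uiter_zero {n : ℕ} (k : ℕ) : (Uop n)^[k] (fun _ => (0:ℝ)) = fun _ => (0:ℝ) :=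
  Function.iterate_fixed uop_zero k

lemma dop_zero {n : ℕ} : Dop n (fun _ => (0:ℝ)) = fun _ => (0:ℝ) := by
  funext y; simp [Dop]

lemma commDU {n m : ℕ} {f : Finset ℕ → ℝ} (hf : lv n m f) (y : Finset ℕ) :
    Dop n (Uop n f) y - Uop n (Dop n f) y = ((Tn n:ℝ) - 2*(m:ℝ)) * f y := by
  by_cases hy : y ∈ Om n
  · have e1 : Dop n (Uop n f) y = ∑ x ∈ Om n, (∑ z ∈ Om n, cU n x z * cD n z y) * f x :=
      calc Dop n (Uop n f) y
          = ∑ z ∈ Om n, ∑ x ∈ Om n, cD n z y * (cU n x z * f x) :=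
            Finset.sum_congr rfl fun z _ => Finset.mul_sum _ _ _
        _ = ∑ x ∈ Om n, ∑ z ∈ Om n, cD n z y * (cU n x z * f x) := Finset.sum_comm
        _ = ∑ x ∈ Om n, (∑ z ∈ Om n, cU n x z * cD n z y) * f x :=
            Finset.sum_congr rfl fun x _ => by
              rw [Finset.sum_mul]
              exact Finset.sum_congr rfl fun z _ => by ring
    have e2 : Uop n (Dop n f) y = ∑ x ∈ Om n, (∑ z ∈ Om n, cD n x z * cU n z y) * f x :=
      calc Uop n (Dop n f) y
          = ∑ z ∈ Om n, ∑ x ∈ Om n, cU n z y * (cD n x z * f x) :=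
            Finset.sum_congr rfl fun z _ => Finset.mul_sum _ _ _
        _ = ∑ x ∈ Om n, ∑ z ∈ Om n, cU n z y * (cD n x z * f x) := Finset.sum_comm
        _ = ∑ x ∈ Om n, (∑ z ∈ Om n, cD n x z * cU n z y) * f x :=
            Finset.sum_congr rfl fun x _ => by
              rw [Finset.sum_mul]
              exact Finset.sum_congr rfl fun z _ => by ring
    rw [e1, e2, ← Finset.sum_sub_distrib]
    have e3 : ∀ x ∈ Om n,
        (∑ z ∈ Om n, cU n x z * cD n z y) * f x - (∑ z ∈ Om n, cD n x z * cU n z y) * f x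
          = (if x = y then ((Tn n:ℝ) - 2*(rk x:ℝ)) else 0) * f x := by
      intro x hx
      rw [← sub_mul, ← Finset.sum_sub_distrib, entry hx hy]
    rw [Finset.sum_congr rfl e3, Finset.sum_eq_single_of_mem y hy]
    · rw [if_pos rfl]
      by_cases hfy : f y = 0
      · rw [hfy, mul_zero, mul_zero]
      · rw [(hf y hfy).2]
    · intro x _ hne
      rw [if_neg hne, zero_mul]
  · have hfy : f y = 0 := by
      by_contra h
      exact hy (hf y h).1
    have e1 : Dop n (Uop n f) y = 0 :=
      Finset.sum_eq_zero fun z hz => by rw [cD_out hz hy, zero_mul]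
    have e2 : Uop n (Dop n f) y = 0 :=
      Finset.sum_eq_zero fun z hz => by rw [cU_out hz hy, zero_mul]
    rw [e1, e2, hfy, mul_zero, sub_zero]

lemma commDU' {n m : ℕ} {f : Finset ℕ → ℝ} (hf : lv n m f) :
    Dop n (Uop n f) = fun y => Uop n (Dop n f) y + ((Tn n:ℝ) - 2*(m:ℝ)) * f y := by
  funext y
  have := commDU hf y
  linarith

lemma comm_pow {n : ℕ} (k : ℕ) : ∀ (m : ℕ) (f : Finset ℕ → ℝ), lv n m f → ∀ y,
    Dop n ((Uop n)^[k+1] f) y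
      = (Uop n)^[k+1] (Dop n f) y + ((k:ℝ)+1) * ((Tn n:ℝ) - 2*(m:ℝ) - (k:ℝ)) * (Uop n)^[k] f y := by
  induction k with
  | zero =>
      intro m f hf y
      have := commDU hf y
      simp only [zero_add, Function.iterate_one, Function.iterate_zero, id_eq, Nat.cast_zero]
      linarith
  | succ k ih =>
      intro m f hf y
      have h1 : Dop n ((Uop n)^[k+1] (Uop n f)) y
          = (Uop n)^[k+1] (Dop n (Uop n f)) y
            + ((k:ℝ)+1) * ((Tn n:ℝ) - 2*((m:ℝ)+1) - (k:ℝ)) * (Uop n)^[k] (Uop n f) y := by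
        have := ih (m+1) (Uop n f) (lv_U hf) y
        push_cast at this ⊢
        convert this using 3
      have h2 : (Uop n)^[k+1] (Dop n (Uop n f)) y
          = (Uop n)^[k+1] ((Uop n) (Dop n f)) y + ((Tn n:ℝ) - 2*(m:ℝ)) * (Uop n)^[k+1] f y := by
        rw [commDU' hf, uiter_add]
      have e1 : (Uop n)^[k+1+1] f = (Uop n)^[k+1] (Uop n f) := Function.iterate_succ_apply _ _ _
      have e2 : (Uop n)^[k+1] (Uop n f) = (Uop n)^[k+1+1] f := (Function.iterate_succ_apply _ _ _).symm
      have e3 : (Uop n)^[k] (Uop n f) = (Uop n)^[k+1] f := (Function.iterate_succ_apply _ _ _).symm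
      have e4 : (Uop n)^[k+1] ((Uop n) (Dop n f)) = (Uop n)^[k+1+1] (Dop n f) :=
        (Function.iterate_succ_apply _ _ _).symm
      rw [e1, h1, h2, e3, e4]
      push_cast
      ring
lemma D_lv0 {n : ℕ} {f : Finset ℕ → ℝ} (hf : lv n 0 f) : Dop n f = fun _ => (0:ℝ) := by
  funext y
  by_contra h
  obtain ⟨x, hx, hfx, j, _, hap, _⟩ := dop_ne h
  have hrk : rk x = 0 := (hf x hfx).2
  rw [rk, Finset.sum_eq_zero_iff] at hrk
  exact Nat.succ_ne_zero j (hrk _ hap.1)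

lemma inj_k {n : ℕ} : ∀ m k, 2*m + k ≤ Tn n → ∀ f : Finset ℕ → ℝ, lv n m f →
    (Uop n)^[k] f = (fun _ => 0) → f = (fun _ => 0) := by
  intro m
  induction m using Nat.strong_induction_on with
  | _ m IH =>
    intro k
    induction k with
    | zero => exact fun _ f _ h => h
    | succ k ihk =>
      intro hk f hf hU
      set c : ℝ := ((k:ℝ)+1) * ((Tn n:ℝ) - 2*(m:ℝ) - (k:ℝ)) with hc
      have hcoef : c ≠ 0 := by
        have h1 : (0:ℝ) < (k:ℝ)+1 := by positivity
        have h2 : (0:ℝ) < (Tn n:ℝ) - 2*(m:ℝ) - (k:ℝ) := by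
          have h3 : ((2*m + (k+1) : ℕ) : ℝ) ≤ ((Tn n : ℕ) : ℝ) := Nat.cast_le.2 hk
          push_cast at h3
          linarith
        exact ne_of_gt (mul_pos h1 h2)
      have key : ∀ y, (Uop n)^[k+1] (Dop n f) y + c * (Uop n)^[k] f y = 0 := by
        intro y
        have h1 := comm_pow k m f hf y
        rw [hU, dop_zero] at h1
        have h1' : (0:ℝ) = (Uop n)^[k+1] (Dop n f) y
            + ((k:ℝ)+1) * ((Tn n:ℝ) - 2*(m:ℝ) - (k:ℝ)) * (Uop n)^[k] f y := h1
        rw [hc]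
        linarith [h1']
      rcases Nat.eq_zero_or_pos m with rfl | hm
      · have hDf : Dop n f = fun _ => 0 := D_lv0 hf
        have hUk : (Uop n)^[k] f = fun _ => 0 := by
          funext y
          have h1 := key y
          rw [hDf, uiter_zero] at h1
          have h2 : c * (Uop n)^[k] f y = 0 := by
            simpa using h1
          exact (mul_eq_zero.1 h2).resolve_left hcoef
        exact ihk (by omega) f hf hUk
      · have hUDf1 : (Uop n)^[k+1] (Dop n f) = fun y => (-c) * (Uop n)^[k] f y :=
          funext fun y => by have := key y; linarith
        have happ : (Uop n)^[k+1+1] (Dop n f) = fun _ => 0 := by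
          rw [Function.iterate_succ_apply', hUDf1]
          calc Uop n (fun y => (-c) * (Uop n)^[k] f y)
              = Uop n (fun y => 0 + (-c) * (Uop n)^[k] f y) := by simp
            _ = fun y => Uop n (fun _ => 0) y + (-c) * Uop n ((Uop n)^[k] f) y :=
                uop_add _ _ _
            _ = fun y => (-c) * (Uop n)^[k+1] f y := by
                rw [uop_zero]
                funext y
                show 0 + (-c) * Uop n ((Uop n)^[k] f) y = (-c) * (Uop n)^[k+1] f y
                rw [show (Uop n)^[k+1] f = Uop n ((Uop n)^[k] f) from
                  Function.iterate_succ_apply' _ _ _, zero_add]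
            _ = fun _ => 0 := by rw [hU]; funext y; simp
        have hDf : Dop n f = fun _ => 0 := by
          refine IH (m-1) (by omega) (k+1+1) (by omega) _ ?_ happ
          have := lv_D hf
          exact this
        have hUk : (Uop n)^[k] f = fun _ => 0 := by
          funext y
          have h1 := key y
          rw [hDf, uiter_zero] at h1
          have h2 : c * (Uop n)^[k] f y = 0 := by simpa using h1
          exact (mul_eq_zero.1 h2).resolve_left hcoef
        exact ihk (by omega) f hf hUk
def Lv (n m : ℕ) : Finset (Finset ℕ) := (Om n).filter (fun S => rk S = m)

lemma mem_Lv {n m : ℕ} {S : Finset ℕ} : S ∈ Lv n m ↔ S ∈ Om n ∧ rk S = m := by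
  simp [Lv]

lemma matching_up {n m : ℕ} (hm : 2*m + 1 ≤ Tn n) :
    ∃ F : Finset ℕ → Finset ℕ, Set.InjOn F (Lv n m) ∧
      ∀ x ∈ Lv n m, ∃ j, j < n ∧ upAp j x ∧ F x = upMv j x := by
  classical
  set ι := {x // x ∈ Lv n m}
  set t : ι → Finset (Finset ℕ) :=
    fun x => ((range n).filter (fun j => upAp j x.1)).image (fun j => upMv j x.1) with ht
  have hall : ∀ s : Finset ι, s.card ≤ (s.biUnion t).card := by
    intro s
    set A : Finset (Finset ℕ) := s.image Subtype.val with hA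
    set B : Finset (Finset ℕ) := s.biUnion t with hB
    have hAcard : A.card = s.card := Finset.card_image_of_injective s Subtype.val_injective
    have hALv : ∀ x ∈ A, x ∈ Lv n m := by
      intro x hx
      obtain ⟨a, _, rfl⟩ := Finset.mem_image.1 hx
      exact a.2
    -- the extension map
    let ext0 : (↥A → ℝ) → (Finset ℕ → ℝ) := fun g x => if h : x ∈ A then g ⟨x, h⟩ else 0
    have ext0_add : ∀ g g' : ↥A → ℝ, ext0 (g + g') = fun x => ext0 g x + ext0 g' x := by
      intro g g'; funext x; simp only [ext0]; split_ifs <;> simp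
    have ext0_smul : ∀ (c : ℝ) (g : ↥A → ℝ), ext0 (c • g) = fun x => c * ext0 g x := by
      intro c g; funext x; simp only [ext0]; split_ifs <;> simp
    have uop_add' : ∀ g h : Finset ℕ → ℝ,
        Uop n (fun x => g x + h x) = fun y => Uop n g y + Uop n h y := by
      intro g h; funext y; unfold Uop; rw [← Finset.sum_add_distrib]
      exact Finset.sum_congr rfl fun x _ => by ring
    have uop_smul : ∀ (c : ℝ) (h : Finset ℕ → ℝ),
        Uop n (fun x => c * h x) = fun y => c * Uop n h y := by
      intro c h; funext y; unfold Uop; rw [Finset.mul_sum]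
      exact Finset.sum_congr rfl fun x _ => by ring
    let Φ : (↥A → ℝ) →ₗ[ℝ] (↥B → ℝ) :=
      { toFun := fun g => fun y => Uop n (ext0 g) y.1
        map_add' := by
          intro g g'
          funext y
          show Uop n (ext0 (g + g')) y.1 = Uop n (ext0 g) y.1 + Uop n (ext0 g') y.1
          rw [ext0_add, uop_add']
        map_smul' := by
          intro c g
          funext y
          show Uop n (ext0 (c • g)) y.1 = c * Uop n (ext0 g) y.1
          rw [ext0_smul, uop_smul] }
    have hker : ∀ g : ↥A → ℝ, Φ g = 0 → g = 0 := by
      intro g hg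
      have hzero : Uop n (ext0 g) = fun _ => 0 := by
        funext y
        by_cases hy : y ∈ B
        · exact congrFun hg ⟨y, hy⟩
        · by_contra hne
          obtain ⟨x, hxOm, hgx, j, hj, hap, rfl⟩ := uop_ne hne
          have hxA : x ∈ A := by
            by_contra hxA
            exact hgx (dif_neg hxA)
          obtain ⟨a, ha, rfl⟩ := Finset.mem_image.1 hxA
          refine hy (Finset.mem_biUnion.2 ⟨a, ha, ?_⟩)
          exact Finset.mem_image.2 ⟨j, Finset.mem_filter.2 ⟨Finset.mem_range.2 hj, hap⟩, rfl⟩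
      have hlv : lv n m (ext0 g) := by
        intro x hx
        have hxA : x ∈ A := by
          by_contra hxA
          exact hx (dif_neg hxA)
        exact mem_Lv.1 (hALv x hxA)
      have := inj_k m 1 (by omega) (ext0 g) hlv (by simpa using hzero)
      funext a
      have h2 : ext0 g a.1 = 0 := congrFun this a.1
      simp only [ext0] at h2
      rwa [dif_pos a.2, Subtype.eta] at h2
    have hinj : Function.Injective Φ := LinearMap.ker_eq_bot.1 (LinearMap.ker_eq_bot'.2 hker)
    have hrank := LinearMap.finrank_le_finrank_of_injective hinj
    rw [Module.finrank_pi, Module.finrank_pi, Fintype.card_coe, Fintype.card_coe] at hrank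
    omega
  obtain ⟨f, hfinj, hft⟩ := (Finset.all_card_le_biUnion_card_iff_exists_injective t).1 hall
  set F : Finset ℕ → Finset ℕ := fun x => if h : x ∈ Lv n m then f ⟨x, h⟩ else x with hF
  have hFx : ∀ (x : Finset ℕ) (hx : x ∈ Lv n m), F x = f ⟨x, hx⟩ := by
    intro x hx
    exact dif_pos hx
  refine ⟨F, ?_, ?_⟩
  · intro x hx y hy he
    simp only [Finset.mem_coe] at hx hy
    rw [hFx x hx, hFx y hy] at he
    exact congrArg Subtype.val (hfinj he)
  · intro x hx
    have := hft ⟨x, hx⟩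
    obtain ⟨j, hj, hje⟩ := Finset.mem_image.1 this
    obtain ⟨hjr, hap⟩ := Finset.mem_filter.1 hj
    exact ⟨j, Finset.mem_range.1 hjr, hap, by rw [hFx x hx, hje]⟩

def cmp (n : ℕ) (S : Finset ℕ) : Finset ℕ := (Icc 1 n) \ S

lemma cmp_mem {n : ℕ} {S : Finset ℕ} : cmp n S ∈ Om n := by
  rw [mem_Om, cmp]; exact Finset.sdiff_subset

lemma cmp_cmp {n : ℕ} {S : Finset ℕ} (h : S ∈ Om n) : cmp n (cmp n S) = S :=
  Finset.sdiff_sdiff_eq_self (mem_Om.1 h)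

lemma rk_cmp {n : ℕ} {S : Finset ℕ} (h : S ∈ Om n) : rk (cmp n S) + rk S = Tn n := by
  rw [rk, rk, cmp, Tn]
  exact Finset.sum_sdiff (mem_Om.1 h)

lemma dn_cmp_iff {n j : ℕ} {S : Finset ℕ} (hS : S ∈ Om n) (hj : j < n) :
    dnAp j S ↔ upAp j (cmp n S) := by
  have h0 := zero_not_mem hS
  constructor
  · rintro ⟨h1, h2⟩
    constructor
    · rcases eq_or_ne j 0 with rfl | hne
      · exact Or.inl rfl
      · refine Or.inr (Finset.mem_sdiff.2 ⟨?_, h2⟩)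
        have : 1 ≤ j+1 ∧ j+1 ≤ n := by
          have := mem_Om.1 hS h1; simp [Finset.mem_Icc] at this; omega
        simp [Finset.mem_Icc]; omega
    · intro hmem
      exact (Finset.mem_sdiff.1 hmem).2 h1
  · rintro ⟨h1, h2⟩
    constructor
    · by_contra hmem
      exact h2 (Finset.mem_sdiff.2 ⟨by simp [Finset.mem_Icc]; omega, hmem⟩)
    · rcases h1 with rfl | h1
      · exact h0
      · exact (Finset.mem_sdiff.1 h1).2
lemma cmp_up {n j : ℕ} {S : Finset ℕ} (hS : S ∈ Om n) (hj : j < n) (hdn : dnAp j S) :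
    cmp n (upMv j (cmp n S)) = dnMv j S := by
  have h0 := zero_not_mem hS
  obtain ⟨h1, h2⟩ := hdn
  have hb : ∀ a, a ∈ S → 1 ≤ a ∧ a ≤ n := by
    intro a ha; have := mem_Om.1 hS ha; simpa [Finset.mem_Icc] using this
  have hbj1 := hb _ h1
  ext a
  by_cases hax : a ∈ S
  · have hba := hb a hax
    have haj : a ≠ j := fun e => h2 (e ▸ hax)
    rcases eq_or_ne j 0 with rfl | hne
    · simp only [cmp, dnMv, upMv, if_pos rfl, Finset.mem_sdiff, Finset.mem_Icc,
        Finset.mem_insert, Finset.mem_erase, hax]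
      simp [hax]
      omega
    · simp only [cmp, dnMv, upMv, if_neg hne, Finset.mem_sdiff, Finset.mem_Icc,
        Finset.mem_insert, Finset.mem_erase]
      simp [hax]
      omega
  · have haj1 : a ≠ j + 1 := fun e => hax (e ▸ h1)
    rcases eq_or_ne j 0 with rfl | hne
    · simp only [cmp, dnMv, upMv, if_pos rfl, Finset.mem_sdiff, Finset.mem_Icc,
        Finset.mem_insert, Finset.mem_erase]
      simp [hax]
      omega
    · simp only [cmp, dnMv, upMv, if_neg hne, Finset.mem_sdiff, Finset.mem_Icc,
        Finset.mem_insert, Finset.mem_erase]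
      simp [hax]
      omega
lemma matching_dn {n m : ℕ} (hm : Tn n + 1 ≤ 2*m) :
    ∃ G : Finset ℕ → Finset ℕ, Set.InjOn G (Lv n m) ∧
      ∀ x ∈ Lv n m, ∃ j, j < n ∧ dnAp j x ∧ G x = dnMv j x := by
  by_cases hmT : m ≤ Tn n
  · have hm' : 2*(Tn n - m) + 1 ≤ Tn n := by omega
    obtain ⟨F, hFinj, hFp⟩ := matching_up hm'
    have hc : ∀ x ∈ Lv n m, cmp n x ∈ Lv n (Tn n - m) := by
      intro x hx
      obtain ⟨hxOm, hxrk⟩ := mem_Lv.1 hx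
      refine mem_Lv.2 ⟨cmp_mem, ?_⟩
      have := rk_cmp hxOm
      omega
    refine ⟨fun x => cmp n (F (cmp n x)), ?_, ?_⟩
    · intro x hx y hy he
      simp only [Finset.mem_coe] at hx hy
      obtain ⟨hxOm, hxrk⟩ := mem_Lv.1 hx
      obtain ⟨hyOm, hyrk⟩ := mem_Lv.1 hy
      obtain ⟨j, hj, hap, hFe⟩ := hFp _ (hc x hx)
      obtain ⟨j', hj', hap', hFe'⟩ := hFp _ (hc y hy)
      have h1 : F (cmp n x) ∈ Om n := hFe ▸ up_mem hap hj cmp_mem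
      have h2 : F (cmp n y) ∈ Om n := hFe' ▸ up_mem hap' hj' cmp_mem
      have he2 := congrArg (cmp n) he
      rw [cmp_cmp h1, cmp_cmp h2] at he2
      have he3 := hFinj (Finset.mem_coe.2 (hc x hx)) (Finset.mem_coe.2 (hc y hy)) he2
      have he4 := congrArg (cmp n) he3
      rwa [cmp_cmp hxOm, cmp_cmp hyOm] at he4
    · intro x hx
      obtain ⟨hxOm, hxrk⟩ := mem_Lv.1 hx
      obtain ⟨j, hj, hap, hFe⟩ := hFp _ (hc x hx)
      have hdn : dnAp j x := (dn_cmp_iff hxOm hj).2 hap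
      refine ⟨j, hj, hdn, ?_⟩
      show cmp n (F (cmp n x)) = dnMv j x
      rw [hFe, cmp_up hxOm hj hdn]
  · refine ⟨id, ?_, ?_⟩
    · intro x hx
      exfalso
      obtain ⟨hxOm, hxrk⟩ := mem_Lv.1 (Finset.mem_coe.1 hx)
      have := rk_le_Tn hxOm
      omega
    · intro x hx
      exfalso
      obtain ⟨hxOm, hxrk⟩ := mem_Lv.1 hx
      have := rk_le_Tn hxOm
      omega

def cov (n : ℕ) (x y : Finset ℕ) : Prop := ∃ j, j < n ∧ upAp j x ∧ y = upMv j x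

def Rel (n : ℕ) : Finset ℕ → Finset ℕ → Prop := Relation.ReflTransGen (cov n)

theorem core (n : ℕ) (b : ℕ → ℝ) (hb1 : 0 < n → 0 < b 1)
    (hbm : ∀ j, 1 ≤ j → j+1 ≤ n → b j < b (j+1)) (t : ℝ) :
    ((Om n).filter (fun S => ∑ v ∈ S, b v = t)).card ≤ (Lv n (Tn n / 2)).card := by
  classical
  set md := Tn n / 2 with hmd
  -- choose the matchings
  have hFex : ∀ m : ℕ, ∃ F : Finset ℕ → Finset ℕ, (m < md →
      Set.InjOn F (Lv n m) ∧ ∀ x ∈ Lv n m, ∃ j, j < n ∧ upAp j x ∧ F x = upMv j x) := by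
    intro m
    by_cases h : m < md
    · obtain ⟨F, h1, h2⟩ := matching_up (n := n) (m := m) (by omega)
      exact ⟨F, fun _ => ⟨h1, h2⟩⟩
    · exact ⟨id, fun h' => absurd h' h⟩
  choose Fu hFu using hFex
  have hGex : ∀ m : ℕ, ∃ G : Finset ℕ → Finset ℕ, (md < m →
      Set.InjOn G (Lv n m) ∧ ∀ x ∈ Lv n m, ∃ j, j < n ∧ dnAp j x ∧ G x = dnMv j x) := by
    intro m
    by_cases h : md < m
    · obtain ⟨G, h1, h2⟩ := matching_dn (n := n) (m := m) (by omega)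
      exact ⟨G, fun _ => ⟨h1, h2⟩⟩
    · exact ⟨id, fun h' => absurd h' h⟩
  choose Gd hGd using hGex
  set stp : Finset ℕ → Finset ℕ :=
    fun x => if rk x < md then Fu (rk x) x else if md < rk x then Gd (rk x) x else x with hstp
  have fact1 : ∀ x, x ∈ Om n → rk x < md →
      stp x ∈ Om n ∧ rk (stp x) = rk x + 1 ∧ cov n x (stp x) := by
    intro x hx h
    obtain ⟨j, hj, hap, he⟩ := (hFu (rk x) h).2 x (mem_Lv.2 ⟨hx, rfl⟩)
    have hs : stp x = upMv j x := by rw [hstp]; simp only [if_pos h]; exact he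
    rw [hs]
    exact ⟨up_mem hap hj hx, rk_up hap (zero_not_mem hx), j, hj, hap, rfl⟩
  have fact2 : ∀ x, x ∈ Om n → md < rk x →
      stp x ∈ Om n ∧ rk (stp x) + 1 = rk x ∧ cov n (stp x) x := by
    intro x hx h
    obtain ⟨j, hj, hdn, he⟩ := (hGd (rk x) h).2 x (mem_Lv.2 ⟨hx, rfl⟩)
    have hs : stp x = dnMv j x := by
      rw [hstp]; simp only [if_neg (by omega : ¬ rk x < md), if_pos h]; exact he
    rw [hs]
    refine ⟨dn_mem hdn hx, rk_dn hdn hx, j, hj, (dn_up hdn (zero_not_mem hx)).1,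
      ((dn_up hdn (zero_not_mem hx)).2).symm⟩
  have fact3 : ∀ x, rk x = md → stp x = x := by
    intro x h
    rw [hstp]
    simp only [if_neg (by omega : ¬ rk x < md), if_neg (by omega : ¬ md < rk x)]
  have iter_up : ∀ (t : ℕ) (x : Finset ℕ), x ∈ Om n → rk x ≤ md →
      stp^[t] x ∈ Om n ∧ rk (stp^[t] x) = min (rk x + t) md ∧ Rel n x (stp^[t] x) := by
    intro t
    induction t with
    | zero =>
        intro x hx h
        exact ⟨hx, by simp; omega, Relation.ReflTransGen.refl⟩
    | succ t ih =>
        intro x hx h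
        obtain ⟨h1, h2, h3⟩ := ih x hx h
        rw [Function.iterate_succ_apply']
        rcases lt_or_eq_of_le (by omega : rk (stp^[t] x) ≤ md) with hlt | heq
        · obtain ⟨g1, g2, g3⟩ := fact1 _ h1 hlt
          exact ⟨g1, by omega, Relation.ReflTransGen.tail h3 g3⟩
        · rw [fact3 _ heq]
          exact ⟨h1, by omega, h3⟩
  have iter_dn : ∀ (t : ℕ) (x : Finset ℕ), x ∈ Om n → md ≤ rk x →
      stp^[t] x ∈ Om n ∧ rk (stp^[t] x) = max (rk x - t) md ∧ Rel n (stp^[t] x) x := by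
    intro t
    induction t with
    | zero =>
        intro x hx h
        exact ⟨hx, by simp; omega, Relation.ReflTransGen.refl⟩
    | succ t ih =>
        intro x hx h
        obtain ⟨h1, h2, h3⟩ := ih x hx h
        rw [Function.iterate_succ_apply']
        rcases lt_or_eq_of_le (by omega : md ≤ rk (stp^[t] x)) with hlt | heq
        · obtain ⟨g1, g2, g3⟩ := fact2 _ h1 hlt
          exact ⟨g1, by omega, Relation.ReflTransGen.head g3 h3⟩
        · rw [fact3 _ heq.symm]
          exact ⟨h1, by omega, h3⟩
  have inj_up : ∀ (t : ℕ) (x y : Finset ℕ), x ∈ Om n → y ∈ Om n → rk x = rk y →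
      rk x + t ≤ md → stp^[t] x = stp^[t] y → x = y := by
    intro t
    induction t with
    | zero => exact fun x y _ _ _ _ h => h
    | succ t ih =>
        intro x y hx hy hrk hle he
        rw [Function.iterate_succ_apply, Function.iterate_succ_apply] at he
        obtain ⟨g1, g2, _⟩ := fact1 x hx (by omega)
        obtain ⟨g1', g2', _⟩ := fact1 y hy (by omega)
        have hse : stp x = stp y := ih _ _ g1 g1' (by omega) (by omega) he
        have hfx : stp x = Fu (rk x) x := by rw [hstp]; simp only [if_pos (by omega : rk x < md)]
        have hfy : stp y = Fu (rk y) y := by rw [hstp]; simp only [if_pos (by omega : rk y < md)]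
        rw [hfx, hfy, ← hrk] at hse
        exact (hFu (rk x) (by omega)).1 (Finset.mem_coe.2 (mem_Lv.2 ⟨hx, rfl⟩))
          (Finset.mem_coe.2 (mem_Lv.2 ⟨hy, hrk.symm⟩)) hse
  have inj_dn : ∀ (t : ℕ) (x y : Finset ℕ), x ∈ Om n → y ∈ Om n → rk x = rk y →
      md + t ≤ rk x → stp^[t] x = stp^[t] y → x = y := by
    intro t
    induction t with
    | zero => exact fun x y _ _ _ _ h => h
    | succ t ih =>
        intro x y hx hy hrk hle he
        rw [Function.iterate_succ_apply, Function.iterate_succ_apply] at he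
        obtain ⟨g1, g2, _⟩ := fact2 x hx (by omega)
        obtain ⟨g1', g2', _⟩ := fact2 y hy (by omega)
        have hse : stp x = stp y := ih _ _ g1 g1' (by omega) (by omega) he
        have hfx : stp x = Gd (rk x) x := by
          rw [hstp]; simp only [if_neg (by omega : ¬ rk x < md), if_pos (by omega : md < rk x)]
        have hfy : stp y = Gd (rk y) y := by
          rw [hstp]; simp only [if_neg (by omega : ¬ rk y < md), if_pos (by omega : md < rk y)]
        rw [hfx, hfy, ← hrk] at hse
        exact (hGd (rk x) (by omega)).1 (Finset.mem_coe.2 (mem_Lv.2 ⟨hx, rfl⟩))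
          (Finset.mem_coe.2 (mem_Lv.2 ⟨hy, hrk.symm⟩)) hse
  have fix_md : ∀ (s : ℕ) (z : Finset ℕ), rk z = md → stp^[s] z = z := by
    intro s z hz
    induction s with
    | zero => rfl
    | succ s ih => rw [Function.iterate_succ_apply', ih, fact3 _ hz]
  have hmdT : md ≤ Tn n := by omega
  have reach_up : ∀ x, x ∈ Om n → rk x ≤ md → stp^[Tn n] x = stp^[md - rk x] x := by
    intro x hx h
    obtain ⟨h1, h2, _⟩ := iter_up (md - rk x) x hx h
    have he : Tn n = (Tn n - (md - rk x)) + (md - rk x) := by omega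
    rw [he, Function.iterate_add_apply, fix_md _ _ (by omega)]
  have reach_dn : ∀ x, x ∈ Om n → md ≤ rk x → stp^[Tn n] x = stp^[rk x - md] x := by
    intro x hx h
    obtain ⟨h1, h2, _⟩ := iter_dn (rk x - md) x hx h
    have hrT := rk_le_Tn hx
    have he : Tn n = (Tn n - (rk x - md)) + (rk x - md) := by omega
    rw [he, Function.iterate_add_apply, fix_md _ _ (by omega)]
  have main : ∀ x y, x ∈ Om n → y ∈ Om n → stp^[Tn n] x = stp^[Tn n] y →
      Rel n x y ∨ Rel n y x := by
    have below : ∀ x y, x ∈ Om n → y ∈ Om n → rk x ≤ rk y → rk y ≤ md →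
        stp^[Tn n] x = stp^[Tn n] y → Rel n x y := by
      intro x y hx hy hxy hym he
      obtain ⟨h1, h2, h3⟩ := iter_up (rk y - rk x) x hx (by omega)
      have h2' : rk (stp^[rk y - rk x] x) = rk y := by omega
      have he2 : stp^[md - rk y] (stp^[rk y - rk x] x) = stp^[md - rk y] y := by
        rw [← Function.iterate_add_apply]
        have : md - rk y + (rk y - rk x) = md - rk x := by omega
        rw [this, ← reach_up x hx (by omega), ← reach_up y hy hym, he]
      have := inj_up (md - rk y) _ y h1 hy h2' (by omega) he2
      rwa [this] at h3
    have above : ∀ x y, x ∈ Om n → y ∈ Om n → rk y ≤ rk x → md ≤ rk y →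
        stp^[Tn n] x = stp^[Tn n] y → Rel n y x := by
      intro x y hx hy hxy hym he
      obtain ⟨h1, h2, h3⟩ := iter_dn (rk x - rk y) x hx (by omega)
      have h2' : rk (stp^[rk x - rk y] x) = rk y := by omega
      have he2 : stp^[rk y - md] (stp^[rk x - rk y] x) = stp^[rk y - md] y := by
        rw [← Function.iterate_add_apply]
        have : rk y - md + (rk x - rk y) = rk x - md := by omega
        rw [this, ← reach_dn x hx (by omega), ← reach_dn y hy hym, he]
      have := inj_dn (rk y - md) _ y h1 hy h2' (by omega) he2
      rwa [this] at h3
    intro x y hx hy he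
    rcases le_or_gt (rk x) md with hx1 | hx1 <;> rcases le_or_gt (rk y) md with hy1 | hy1
    · rcases le_total (rk x) (rk y) with h | h
      · exact Or.inl (below x y hx hy h hy1 he)
      · exact Or.inr (below y x hy hx h hx1 he.symm)
    · refine Or.inl (Relation.ReflTransGen.trans (iter_up (Tn n) x hx hx1).2.2 ?_)
      rw [he]
      exact (iter_dn (Tn n) y hy (by omega)).2.2
    · refine Or.inr (Relation.ReflTransGen.trans (iter_up (Tn n) y hy hy1).2.2 ?_)
      rw [← he]
      exact (iter_dn (Tn n) x hx (by omega)).2.2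
    · rcases le_total (rk x) (rk y) with h | h
      · exact Or.inl (above y x hy hx h (by omega) he.symm)
      · exact Or.inr (above x y hx hy h (by omega) he)
  -- weight sums increase strictly along cov
  have cov_bsum : ∀ x y, cov n x y → x ∈ Om n →
      y ∈ Om n ∧ ∑ v ∈ x, b v < ∑ v ∈ y, b v := by
    rintro x y ⟨j, hj, hap, rfl⟩ hx
    refine ⟨up_mem hap hj hx, ?_⟩
    have hnm : j+1 ∉ x.erase j := by simp [Finset.mem_erase, hap.2]
    rw [upMv, Finset.sum_insert hnm]
    rcases eq_or_ne j 0 with rfl | hne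
    · rw [erase_eq_of_notMem (zero_not_mem hx)]
      have := hb1 (by omega)
      linarith
    · have hjx : j ∈ x := hap.1.resolve_left hne
      have hsum : ∑ v ∈ x.erase j, b v + b j = ∑ v ∈ x, b v := Finset.sum_erase_add x b hjx
      have := hbm j (by omega) (by omega)
      linarith
  have rel_bsum : ∀ x y, Rel n x y → x ∈ Om n → y ∈ Om n ∧ ∑ v ∈ x, b v ≤ ∑ v ∈ y, b v := by
    intro x y h hx
    induction h with
    | refl => exact ⟨hx, le_refl _⟩
    | tail h1 h2 ih =>
        obtain ⟨ha, hb'⟩ := ih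
        obtain ⟨hc, hd⟩ := cov_bsum _ _ h2 ha
        exact ⟨hc, by linarith⟩
  have rel_strict : ∀ x y, Rel n x y → x ∈ Om n → x ≠ y → ∑ v ∈ x, b v < ∑ v ∈ y, b v := by
    intro x y h hx hne
    rcases Relation.ReflTransGen.cases_head h with rfl | ⟨z, h1, h2⟩
    · exact absurd rfl hne
    · obtain ⟨hz, hlt⟩ := cov_bsum _ _ h1 hx
      obtain ⟨_, hle⟩ := rel_bsum _ _ h2 hz
      linarith
  -- conclude
  apply Finset.card_le_card_of_injOn (stp^[Tn n])
  · intro x hx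
    obtain ⟨hxOm, _⟩ := Finset.mem_filter.1 hx
    rcases le_or_gt (rk x) md with h | h
    · obtain ⟨h1, h2, _⟩ := iter_up (Tn n) x hxOm h
      have hrT := rk_le_Tn hxOm
      exact mem_Lv.2 ⟨h1, by omega⟩
    · obtain ⟨h1, h2, _⟩ := iter_dn (Tn n) x hxOm (by omega)
      have hrT := rk_le_Tn hxOm
      exact mem_Lv.2 ⟨h1, by omega⟩
  · intro x hx y hy he
    simp only [Finset.mem_coe, Finset.mem_filter] at hx hy
    obtain ⟨hxOm, hxs⟩ := hx
    obtain ⟨hyOm, hys⟩ := hy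
    by_contra hne
    rcases main x y hxOm hyOm he with h | h
    · have := rel_strict x y h hxOm hne
      rw [hxs, hys] at this
      exact lt_irrefl _ this
    · have := rel_strict y x h hyOm (Ne.symm hne)
      rw [hxs, hys] at this
      exact lt_irrefl _ this
def bfun (N : ℕ) (c : Fin N → ℝ) (v : ℕ) : ℝ := if h : v - 1 < N then c ⟨v-1, h⟩ else 0

lemma bfun_eq (N : ℕ) (c : Fin N → ℝ) (v : ℕ) (h : v - 1 < N) :
    bfun N c v = c ⟨v-1, h⟩ := dif_pos h

lemma bfun_succ (N : ℕ) (c : Fin N → ℝ) (i : Fin N) : bfun N c ((i:ℕ)+1) = c i := by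
  rw [bfun_eq N c _ (show (i:ℕ)+1-1 < N by simpa using i.isLt)]
  exact congrArg c (Fin.ext (by simp))

def img (N : ℕ) (x : Fin N → Bool) : Finset ℕ :=
  (univ.filter (fun i => x i = true)).image (fun i : Fin N => (i:ℕ)+1)

def dec (N : ℕ) (S : Finset ℕ) : Fin N → Bool := fun i => decide ((i:ℕ)+1 ∈ S)

lemma mem_img {N : ℕ} {x : Fin N → Bool} {v : ℕ} :
    v ∈ img N x ↔ ∃ i : Fin N, x i = true ∧ (i:ℕ)+1 = v := by
  simp [img]

lemma img_Om {N : ℕ} (x : Fin N → Bool) : img N x ∈ Om N := by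
  rw [mem_Om]
  intro v hv
  obtain ⟨i, _, rfl⟩ := mem_img.1 hv
  have := i.isLt
  simp [Finset.mem_Icc]

lemma img_sum {N : ℕ} (x : Fin N → Bool) (b : ℕ → ℝ) :
    ∑ v ∈ img N x, b v = ∑ i : Fin N, (if x i then b ((i:ℕ)+1) else 0) := by
  rw [img, Finset.sum_image (by intro i _ j _ h; exact Fin.ext (by simp only at h; omega))]
  rw [Finset.sum_filter]

lemma dec_img {N : ℕ} (x : Fin N → Bool) : dec N (img N x) = x := by
  funext i
  rcases hxi : x i with hf | ht
  · simp only [dec]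
    rw [decide_eq_false]
    rw [mem_img]
    rintro ⟨i', hi', he⟩
    have : i' = i := Fin.ext (by omega)
    rw [this, hxi] at hi'
    exact Bool.false_ne_true hi'
  · simp only [dec]
    rw [decide_eq_true]
    exact mem_img.2 ⟨i, hxi, rfl⟩

lemma img_dec {N : ℕ} {S : Finset ℕ} (hS : S ∈ Om N) : img N (dec N S) = S := by
  ext v
  rw [mem_img]
  constructor
  · rintro ⟨i, hi, rfl⟩
    simpa [dec] using hi
  · intro hv
    have hb := mem_Om.1 hS hv
    rw [Finset.mem_Icc] at hb
    refine ⟨⟨v-1, by omega⟩, ?_, by show v-1+1 = v; omega⟩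
    simp only [dec]
    rw [decide_eq_true]
    show v-1+1 ∈ S
    have : (v:ℕ)-1+1 = v := by omega
    rw [this]
    exact hv

lemma sum_img_eq {N : ℕ} (c : Fin N → ℝ) (x : Fin N → Bool) :
    ∑ v ∈ img N x, bfun N c v = ∑ i, c i * (if x i then 1 else 0) := by
  rw [img_sum]
  refine Finset.sum_congr rfl fun i _ => ?_
  rcases hxi : x i with hf | ht <;> simp [hxi, bfun_succ]

lemma cardeq (N : ℕ) (c : Fin N → ℝ) (t : ℝ) :
    (univ.filter fun x : Fin N → Bool => ∑ i, c i * (if x i then 1 else 0) = t).card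
      = ((Om N).filter fun S => ∑ v ∈ S, bfun N c v = t).card := by
  classical
  refine Finset.card_bij' (fun x _ => img N x) (fun S _ => dec N S) ?_ ?_ ?_ ?_
  · intro x hx
    rw [Finset.mem_filter] at hx ⊢
    exact ⟨img_Om x, by rw [sum_img_eq]; exact hx.2⟩
  · intro S hS
    rw [Finset.mem_filter] at hS ⊢
    refine ⟨Finset.mem_univ _, ?_⟩
    rw [← sum_img_eq c (dec N S), img_dec hS.1]
    exact hS.2
  · intro x _
    exact dec_img x
  · intro S hS
    rw [Finset.mem_filter] at hS
    exact img_dec hS.1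

lemma stepA (N : ℕ) (c : Fin N → ℝ) (hsm : StrictMono c) (hcpos : ∀ i, 0 < c i) (k : ℝ) :
    ((Om N).filter fun S => ∑ v ∈ S, bfun N c v = k).card
      ≤ (Lv N (Tn N / 2)).card := by
  refine core N (bfun N c) ?_ ?_ k
  · intro hN
    have h1 : bfun N c 1 = c ⟨0, hN⟩ := bfun_eq N c 1 (show 1-1 < N by omega)
    rw [h1]
    exact hcpos _
  · intro j hj1 hjN
    have hb1 : bfun N c j = c ⟨j-1, by omega⟩ := bfun_eq N c j (by omega)
    have hb2 : bfun N c (j+1) = c ⟨j, by omega⟩ := by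
      rw [bfun_eq N c (j+1) (by omega)]
      exact congrArg c (Fin.ext (by simp))
    rw [hb1, hb2]
    exact hsm (by simp [Fin.lt_def]; omega)

lemma stepB (N : ℕ) : ((Om N).filter fun S =>
      ∑ v ∈ S, bfun N (fun i : Fin N => ((i:ℕ):ℝ)+1) v = ((N * (N + 1) / 4 : ℕ) : ℝ))
      = Lv N (Tn N / 2) := by
  ext S
  rw [mem_Lv, Finset.mem_filter]
  have hiff : S ∈ Om N →
      ∑ v ∈ S, bfun N (fun i : Fin N => ((i:ℕ):ℝ)+1) v = ((rk S : ℕ) : ℝ) := by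
    intro hOm
    rw [rk]
    push_cast
    refine Finset.sum_congr rfl fun v hv => ?_
    have hb := Finset.mem_Icc.1 (mem_Om.1 hOm hv)
    rw [bfun_eq N _ v (show v-1 < N by omega)]
    show ((v-1:ℕ):ℝ)+1 = (id v : ℝ)
    simp only [id_eq]
    rw [Nat.cast_sub (by omega : 1 ≤ v)]
    push_cast
    ring
  constructor
  · rintro ⟨hOm, hsum⟩
    refine ⟨hOm, ?_⟩
    rw [hiff hOm] at hsum
    have h2 := Nat.cast_inj.1 hsum
    rw [h2, TnEq, Nat.div_div_eq_div_mul]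
  · rintro ⟨hOm, hrk⟩
    refine ⟨hOm, ?_⟩
    rw [hiff hOm, hrk]
    congr 1
    rw [TnEq, Nat.div_div_eq_div_mul]

theorem erdos_moser' (N : ℕ) (a : Fin N → ℝ) (hpos : ∀ i, 0 < a i)
    (hinj : Function.Injective a) (k : ℝ) :
    (univ.filter fun x : Fin N → Bool =>
      ∑ i, a i * (if x i then 1 else 0) = k).card ≤
    (univ.filter fun x : Fin N → Bool =>
      ∑ i : Fin N, (((i:ℕ):ℝ)+1) * (if x i then 1 else 0) = ((N * (N + 1) / 4 : ℕ) : ℝ)).card := by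
  set σ := Tuple.sort a with hσ
  set c : Fin N → ℝ := a ∘ σ with hc
  have hmono : Monotone c := Tuple.monotone_sort a
  have hcinj : Function.Injective c := hinj.comp σ.injective
  have hsm : StrictMono c := hmono.strictMono_of_injective hcinj
  have hcpos : ∀ i, 0 < c i := fun i => hpos _
  have step1 : (univ.filter fun x : Fin N → Bool =>
      ∑ i, a i * (if x i then 1 else 0) = k).card
      = (univ.filter fun x : Fin N → Bool =>
      ∑ i, c i * (if x i then 1 else 0) = k).card := by
    refine Finset.card_bij' (fun x _ => x ∘ σ) (fun y _ => y ∘ σ.symm) ?_ ?_ ?_ ?_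
    · intro x hx
      rw [Finset.mem_filter] at hx ⊢
      refine ⟨Finset.mem_univ _, ?_⟩
      show (∑ i : Fin N, a (σ i) * if x (σ i) = true then 1 else 0) = k
      rw [Equiv.sum_comp σ (fun i => a i * (if x i then 1 else 0))]
      exact hx.2
    · intro y hy
      rw [Finset.mem_filter] at hy ⊢
      refine ⟨Finset.mem_univ _, ?_⟩
      show (∑ i : Fin N, a i * if y (σ.symm i) = true then 1 else 0) = k
      calc (∑ i : Fin N, a i * if y (σ.symm i) = true then 1 else 0)
          = ∑ i : Fin N, a (σ i) * if y (σ.symm (σ i)) = true then 1 else 0 :=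
            (Equiv.sum_comp σ (fun i => a i * if y (σ.symm i) = true then 1 else 0)).symm
        _ = ∑ i : Fin N, c i * if y i = true then 1 else 0 := by
            refine Finset.sum_congr rfl fun i _ => ?_
            rw [Equiv.symm_apply_apply]
            rfl
        _ = k := hy.2
    · intro x _
      funext i
      show x (σ (σ.symm i)) = x i
      rw [Equiv.apply_symm_apply]
    · intro y _
      funext i
      show y (σ.symm (σ i)) = y i
      rw [Equiv.symm_apply_apply]
  have step2 := cardeq N c k
  have step3 := stepA N c hsm hcpos k
  have step4a : (univ.filter fun x : Fin N → Bool =>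
      ∑ i : Fin N, (((i:ℕ):ℝ)+1) * (if x i then 1 else 0) = ((N * (N + 1) / 4 : ℕ) : ℝ)).card
      = ((Om N).filter fun S =>
          ∑ v ∈ S, bfun N (fun i : Fin N => ((i:ℕ):ℝ)+1) v = ((N * (N + 1) / 4 : ℕ) : ℝ)).card :=
    cardeq N _ _
  rw [step1, step2, step4a, stepB N]
  exact step3

end EM

theorem erdos_moser_count (N : ℕ) (a : Fin N → ℝ) (hpos : ∀ i, 0 < a i)
    (hinj : Function.Injective a) (k : ℝ) :
    (univ.filter fun x : Fin N → Bool =>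
      ∑ i, a i * (if x i then 1 else 0) = k).card ≤
    (univ.filter fun x : Fin N → Bool =>
      ∑ i : Fin N, (((i:ℕ):ℝ)+1) * (if x i then 1 else 0) = ((N * (N + 1) / 4 : ℕ) : ℝ)).card := by
  have h := EM.erdos_moser' N a hpos hinj k
  simpa only [Finset.filter_congr_decidable] using h

/-- The Erdős–Moser extremal bound: for distinct positive weights, the concentration
probability is at most that of weights `1, 2, …, N` at the midpoint `⌊N(N+1)/4⌋`. -/
theorem erdos_moser (N : ℕ) (a : Fin N → ℝ) (hpos : ∀ i, 0 < a i)
    (hinj : Function.Injective a) (k : ℤ) :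
    wpmf N a (k : ℝ) ≤ wpmf N (fun i => ((i : ℕ) : ℝ) + 1) ((N * (N + 1) / 4 : ℕ) : ℝ) := by
  unfold wpmf
  have hle := erdos_moser_count N a hpos hinj (k:ℝ)
  gcongr
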